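/- Let G be a finite subgroup of O(2n+1) with n ≥ 2 such that every nontrivial element has at most one eigenvalue equal to 1 (eigenspace of eigenvalue 1 of dimension at most 1). Let G₀ = G ∩ SO(2n+1) and suppose G₀ ≠ G. If v is a unit vector fixed by every element of G₀, then every g ∈ G \ G₀ satisfies g(v) = -v. -/

import Mathlib

open Module LinearMap RealInnerProductSpace Matrix

section helpers

lemma aux_det_isCompl {K V : Type*} [Field K] [AddCommGroup V] [Module K V]
    [FiniteDimensional K V]
    (f : V →ₗ[K] V) (p q : Submodule K V) (h : IsCompl p q)
    (hp : ∀ x ∈ p, f x ∈ p) (hq : ∀ x ∈ q, f x ∈ q) :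
    LinearMap.det f = LinearMap.det (f.restrict hp) * LinearMap.det (f.restrict hq) := by
  let e := Submodule.prodEquivOfIsCompl p q h
  have hconj : (e.symm.toLinearMap ∘ₗ f ∘ₗ e.toLinearMap) =
      (f.restrict hp).prodMap (f.restrict hq) := by
    apply LinearMap.ext
    rintro ⟨x, y⟩
    apply e.injective
    simp only [LinearMap.comp_apply, LinearEquiv.coe_coe, LinearEquiv.apply_symm_apply]
    show f (e (x, y)) = e ((f.restrict hp) x, (f.restrict hq) y)
    simp [e, Submodule.coe_prodEquivOfIsCompl, map_add, LinearMap.restrict_apply]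
  have := LinearMap.det_conj f e.symm
  rw [show e.symm.symm = e from rfl] at this
  rw [← this, hconj]
  let b₁ := Module.finBasis K p
  let b₂ := Module.finBasis K q
  rw [← LinearMap.det_toMatrix (b₁.prod b₂), LinearMap.toMatrix_prodMap,
    Matrix.det_fromBlocks_zero₂₁, LinearMap.det_toMatrix, LinearMap.det_toMatrix]

lemma aux_det_adjoint {V : Type} [NormedAddCommGroup V] [InnerProductSpace ℝ V]
    [FiniteDimensional ℝ V] (f : V →ₗ[ℝ] V) :
    LinearMap.det (LinearMap.adjoint f) = LinearMap.det f := by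
  let b := stdOrthonormalBasis ℝ V
  rw [← LinearMap.det_toMatrix b.toBasis, ← LinearMap.det_toMatrix b.toBasis f,
    LinearMap.toMatrix_adjoint b b f, Matrix.det_conjTranspose]
  simp

lemma aux_det_fixed_free {V : Type} [NormedAddCommGroup V] [InnerProductSpace ℝ V]
    [FiniteDimensional ℝ V]
    (f : V →ₗ[ℝ] V) (hf : ∀ x y : V, ⟪f x, f y⟫ = ⟪x, y⟫)
    (hk : ∀ x, f x = x → x = 0) :
    LinearMap.det f = (-1) ^ (finrank ℝ V) := by
  have hadj : (LinearMap.adjoint f) * f = 1 := by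
    apply LinearMap.ext; intro x
    apply ext_inner_right ℝ
    intro y
    simp [Module.End.mul_apply, LinearMap.adjoint_inner_left, hf]
  have hadj' : f * (LinearMap.adjoint f) = 1 := mul_eq_one_comm.mp hadj
  have hker : LinearMap.ker (f - 1) = ⊥ := by
    rw [LinearMap.ker_eq_bot']
    intro x hx
    exact hk x (by have := sub_eq_zero.mp hx; simpa using this)
  have hdet1 : LinearMap.det (f - 1) ≠ 0 := by
    intro h
    have := LinearMap.bot_lt_ker_of_det_eq_zero h
    rw [hker] at this
    exact lt_irrefl _ this
  have key : f * (1 - LinearMap.adjoint f) = f - 1 := by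
    rw [mul_sub, mul_one, hadj']
  have hdet2 : LinearMap.det (f - 1) =
      LinearMap.det f * LinearMap.det (1 - LinearMap.adjoint f) := by
    rw [← key, Module.End.mul_eq_comp, LinearMap.det_comp]
  have hdet3 : LinearMap.det (1 - LinearMap.adjoint f) = LinearMap.det (1 - f) := by
    have : (1 : V →ₗ[ℝ] V) - LinearMap.adjoint f = LinearMap.adjoint (1 - f) := by
      rw [map_sub]
      congr 1
      apply LinearMap.ext; intro x
      apply ext_inner_right ℝ
      intro y
      simp [LinearMap.adjoint_inner_left]
    rw [this, aux_det_adjoint]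
  have hdet4 : LinearMap.det ((1 : V →ₗ[ℝ] V) - f) =
      (-1) ^ (finrank ℝ V) * LinearMap.det (f - 1) := by
    have : (1 : V →ₗ[ℝ] V) - f = (-1 : ℝ) • (f - 1) := by
      ext x; simp
    rw [this, LinearMap.det_smul]
  have hchain : LinearMap.det (f - 1) =
      LinearMap.det f * ((-1) ^ (finrank ℝ V) * LinearMap.det (f - 1)) := by
    conv_lhs => rw [hdet2, hdet3, hdet4]
  have h1 : LinearMap.det f * (-1 : ℝ) ^ (finrank ℝ V) = 1 := by
    have hD : LinearMap.det (f - 1) * (LinearMap.det f * (-1 : ℝ) ^ (finrank ℝ V)) =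
        LinearMap.det (f - 1) * 1 := by rw [mul_one]; linear_combination -hchain
    exact mul_left_cancel₀ hdet1 hD
  have hsq : ((-1 : ℝ) ^ (finrank ℝ V)) * ((-1) ^ (finrank ℝ V)) = 1 := by
    rw [← pow_add]
    exact Even.neg_one_pow ⟨finrank ℝ V, by ring⟩
  calc LinearMap.det f
      = LinearMap.det f * (((-1 : ℝ) ^ (finrank ℝ V)) * ((-1) ^ (finrank ℝ V))) := by
        rw [hsq, mul_one]
    _ = (LinearMap.det f * (-1 : ℝ) ^ (finrank ℝ V)) * (-1) ^ (finrank ℝ V) := by ring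
    _ = (-1) ^ (finrank ℝ V) := by rw [h1, one_mul]

lemma aux_no_fixed {V : Type} [NormedAddCommGroup V] [InnerProductSpace ℝ V]
    [FiniteDimensional ℝ V]
    (f : V →ₗ[ℝ] V) (hf : ∀ x y : V, ⟪f x, f y⟫ = ⟪x, y⟫)
    (hodd : Odd (finrank ℝ V)) (hdet : LinearMap.det f = -1)
    (hdim : finrank ℝ (Module.End.eigenspace f 1) ≤ 1) :
    ∀ x, f x = x → x = 0 := by
  set E := Module.End.eigenspace f 1 with hE
  have hmemE : ∀ x, x ∈ E ↔ f x = x := by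
    intro x
    rw [hE, Module.End.mem_eigenspace_iff, one_smul]
  suffices hEbot : E = ⊥ by
    intro x hx
    have : x ∈ E := (hmemE x).mpr hx
    rwa [hEbot, Submodule.mem_bot] at this
  by_contra hne
  have hpos : 0 < finrank ℝ E := by
    have h0 : finrank ℝ E ≠ 0 := fun h => hne (Submodule.finrank_eq_zero.mp h)
    omega
  have hE1 : finrank ℝ E = 1 := le_antisymm hdim hpos
  have hcompl : IsCompl E Eᗮ := Submodule.isCompl_orthogonal_of_hasOrthogonalProjection
  have hpE : ∀ x ∈ E, f x ∈ E := fun x hx => by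
    rw [hmemE] at hx ⊢; rw [hx]; exact hx
  have hpW : ∀ x ∈ Eᗮ, f x ∈ Eᗮ := by
    intro w hw
    rw [Submodule.mem_orthogonal]
    intro x hxE
    have hfx : f x = x := (hmemE x).mp hxE
    calc ⟪x, f w⟫ = ⟪f x, f w⟫ := by rw [hfx]
      _ = ⟪x, w⟫ := hf x w
      _ = 0 := hw x hxE
  have hdetE : LinearMap.det (f.restrict hpE) = 1 := by
    have : f.restrict hpE = LinearMap.id := by
      apply LinearMap.ext
      intro ⟨x, hx⟩
      apply Subtype.ext
      simpa using (hmemE x).mp hx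
    rw [this, LinearMap.det_id]
  have hdetW : LinearMap.det (f.restrict hpW) = (-1) ^ (finrank ℝ Eᗮ) := by
    apply aux_det_fixed_free
    · intro ⟨x, hx⟩ ⟨y, hy⟩
      exact hf x y
    · intro ⟨x, hx⟩ hfx
      have hxx : f x = x := by simpa using congrArg Subtype.val hfx
      have hxE : x ∈ E := (hmemE x).mpr hxx
      have hx0 : x = 0 := by
        have hinf := hcompl.inf_eq_bot
        have hxmem : x ∈ E ⊓ Eᗮ := ⟨hxE, hx⟩
        rw [hinf] at hxmem
        simpa using hxmem
      exact Subtype.ext (by simpa using hx0)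
  have hfact := aux_det_isCompl f E Eᗮ hcompl hpE hpW
  rw [hdet, hdetE, hdetW, one_mul] at hfact
  have hrank := Submodule.finrank_add_finrank_orthogonal (K := E)
  rw [hE1] at hrank
  have hWeven : Even (finrank ℝ Eᗮ) := by
    rcases hodd with ⟨k, hk⟩
    exact ⟨k, by omega⟩
  rw [Even.neg_one_pow hWeven] at hfact
  norm_num at hfact

end helpers

/-- The dimension of the eigenspace of eigenvalue 1 of (the linear map given by) a matrix. -/
noncomputable def fixedSpaceDim {m : ℕ} (g : Matrix (Fin m) (Fin m) ℝ) : ℕ :=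
  Module.finrank ℝ ↥(Module.End.eigenspace (Matrix.toLin' g) 1)

/-- Let `G` be a finite subgroup of `O(2n+1)`, `n ≥ 2`, with every nontrivial element having
at most one eigenvalue `1`. Let `G₀ = G ∩ SO(2n+1)` (the determinant-one elements) and suppose
`G₀ ≠ G`. If a unit vector `v` is fixed by every element of `G₀`, then every
`g ∈ G \ G₀` satisfies `g(v) = -v`. -/
theorem reflection_on_fixed_vector
    (n : ℕ) (hn : 2 ≤ n)
    (G : Subgroup (Matrix.orthogonalGroup (Fin (2*n+1)) ℝ)) (hG : Finite G)
    (heig : ∀ g ∈ G, g ≠ 1 →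
      fixedSpaceDim (g : Matrix (Fin (2*n+1)) (Fin (2*n+1)) ℝ) ≤ 1)
    (hproper : ∃ g ∈ G, ((g : Matrix (Fin (2*n+1)) (Fin (2*n+1)) ℝ)).det ≠ 1)
    (v : Fin (2*n+1) → ℝ) (hv : dotProduct v v = 1)
    (hfix : ∀ g ∈ G, ((g : Matrix (Fin (2*n+1)) (Fin (2*n+1)) ℝ)).det = 1 →
      Matrix.mulVec (g : Matrix (Fin (2*n+1)) (Fin (2*n+1)) ℝ) v = v) :
    ∀ g ∈ G, ((g : Matrix (Fin (2*n+1)) (Fin (2*n+1)) ℝ)).det ≠ 1 →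
      Matrix.mulVec (g : Matrix (Fin (2*n+1)) (Fin (2*n+1)) ℝ) v = -v := by
  intro g hg hdetne
  set A : Matrix (Fin (2*n+1)) (Fin (2*n+1)) ℝ := (g : Matrix (Fin (2*n+1)) (Fin (2*n+1)) ℝ)
    with hA
  -- orthogonality
  have horth : Aᵀ * A = 1 := by
    have := (Matrix.mem_orthogonalGroup_iff' (Fin (2*n+1)) ℝ).mp g.2
    simpa [Matrix.star_eq_conjTranspose] using this
  have hdot : ∀ x y : Fin (2*n+1) → ℝ,
      dotProduct (A.mulVec x) (A.mulVec y) = dotProduct x y := by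
    intro x y
    rw [← Matrix.vecMul_transpose, Matrix.dotProduct_mulVec, Matrix.vecMul_vecMul, horth,
      Matrix.vecMul_one]
  -- determinant is -1
  have hdet2 : A.det * A.det = 1 := by
    have h := congrArg Matrix.det horth
    rwa [Matrix.det_mul, Matrix.det_transpose, Matrix.det_one] at h
  have hdetA : A.det = -1 := by
    rcases mul_self_eq_one_iff.mp hdet2 with h | h
    · exact absurd h hdetne
    · exact h
  -- g² fixes v
  have hcoe : ((g * g : Matrix.orthogonalGroup (Fin (2*n+1)) ℝ) :
      Matrix (Fin (2*n+1)) (Fin (2*n+1)) ℝ) = A * A := rfl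
  have hgg : A.mulVec (A.mulVec v) = v := by
    have hmem : g * g ∈ G := mul_mem hg hg
    have hdet : ((g * g : Matrix.orthogonalGroup (Fin (2*n+1)) ℝ) :
        Matrix (Fin (2*n+1)) (Fin (2*n+1)) ℝ).det = 1 := by
      rw [hcoe, Matrix.det_mul, hdetA]; norm_num
    have := hfix (g * g) hmem hdet
    rw [hcoe] at this
    rwa [Matrix.mulVec_mulVec]
  -- the vector u = v + A v is fixed by A
  set u : Fin (2*n+1) → ℝ := v + A.mulVec v with hu
  have hAu : A.mulVec u = u := by
    rw [hu, Matrix.mulVec_add, hgg]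
    exact add_comm _ _
  -- eigenvalue dimension bound
  have hgne : g ≠ 1 := by
    intro h
    apply hdetne
    rw [hA, h]
    simp
  have hdim : fixedSpaceDim A ≤ 1 := heig g hg hgne
  -- move to Euclidean space
  set f : EuclideanSpace ℝ (Fin (2*n+1)) →ₗ[ℝ] EuclideanSpace ℝ (Fin (2*n+1)) :=
    Matrix.toEuclideanLin A with hf
  have hfapp : ∀ x : EuclideanSpace ℝ (Fin (2*n+1)),
      f x = (WithLp.equiv 2 (Fin (2*n+1) → ℝ)).symm
        (A.mulVec (WithLp.equiv 2 (Fin (2*n+1) → ℝ) x)) := fun x =>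
    Matrix.toEuclideanLin_apply A x
  have hinner : ∀ x y : EuclideanSpace ℝ (Fin (2*n+1)), ⟪f x, f y⟫ = ⟪x, y⟫ := by
    intro x y
    rw [hfapp, hfapp]
    have := hdot (WithLp.equiv 2 (Fin (2*n+1) → ℝ) x) (WithLp.equiv 2 (Fin (2*n+1) → ℝ) y)
    simpa [PiLp.inner_apply, RCLike.inner_apply, dotProduct, mul_comm] using this
  have hodd : Odd (finrank ℝ (EuclideanSpace ℝ (Fin (2*n+1)))) := by
    rw [finrank_euclideanSpace_fin]
    exact ⟨n, by ring⟩
  have hdetf : LinearMap.det f = -1 := by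
    rw [hf, Matrix.toEuclideanLin_eq_toLin, LinearMap.det_toLin]
    exact hdetA
  have hdimf : finrank ℝ (Module.End.eigenspace f 1) ≤ 1 := by
    have hmap : (Module.End.eigenspace f 1).map
        ((WithLp.linearEquiv 2 ℝ (Fin (2*n+1) → ℝ)) :
          EuclideanSpace ℝ (Fin (2*n+1)) →ₗ[ℝ] (Fin (2*n+1) → ℝ))
        = Module.End.eigenspace (Matrix.toLin' A) 1 := by
      ext x
      rw [Submodule.mem_map_equiv, Module.End.mem_eigenspace_iff,
        Module.End.mem_eigenspace_iff, one_smul, one_smul, Matrix.toLin'_apply, hfapp]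
      constructor
      · intro h
        have := congrArg (WithLp.equiv 2 (Fin (2*n+1) → ℝ)) h
        simpa using this
      · intro h
        apply (WithLp.equiv 2 (Fin (2*n+1) → ℝ)).injective
        simpa using h
    have := LinearEquiv.finrank_map_eq
      (WithLp.linearEquiv 2 ℝ (Fin (2*n+1) → ℝ)) (Module.End.eigenspace f 1)
    rw [hmap] at this
    unfold fixedSpaceDim at hdim
    rw [this] at hdim
    exact hdim
  -- apply the key lemma
  have hzero := aux_no_fixed f hinner hodd hdetf hdimf
    ((WithLp.equiv 2 (Fin (2*n+1) → ℝ)).symm u) (by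
      rw [hfapp]
      simp [hAu])
  have hu0 : u = 0 := by
    have := congrArg (WithLp.equiv 2 (Fin (2*n+1) → ℝ)) hzero
    simpa using this
  have hsum : v + A.mulVec v = 0 := by rw [← hu, hu0]
  exact (neg_eq_of_add_eq_zero_right hsum).symm
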